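/- Dobrushin comparison theorem (Theorem 3.3). Let I be a finite set and 𝕊 = ∏_{i∈I} 𝕊^i with each 𝕊^i a Polish space, and let X^i : x ↦ x^i be the coordinate projections. Let ρ and ρ̄ be probability measures on 𝕊 with regular conditional distributions ρ_x^i(A) = ρ(X^i ∈ A | X^{I∖{i}} = x^{I∖{i}}) and ρ̄_x^i(A) = ρ̄(X^i ∈ A | X^{I∖{i}} = x^{I∖{i}}). Define C_{ij} = (1/2) sup{‖ρ_x^i − ρ_{x̄}^i‖ : x, x̄ ∈ 𝕊, x^{I∖{j}} = x̄^{I∖{j}}} and b_j = sup_{x∈𝕊} ‖ρ_x^j − ρ̄_x^j‖. If the Dobrushin condition max_{i∈I} Σ_{j∈I} C_{ij} < 1 holds, then the matrix D := Σ_{n∈ℕ} C^n is finite, and for every J ⊆ I, ‖ρ − ρ̄‖_J ≤ Σ_{i∈J} Σ_{j∈I} D_{ij} b_j. -/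
import Mathlib


open MeasureTheory

/-- The total variation distance `‖μ - ν‖ = sup {|μ(h) - ν(h)| : h measurable, |h| ≤ 1}`. -/
noncomputable def tvDist {α : Type*} [MeasurableSpace α] (μ ν : Measure α) : ℝ :=
  sSup { d : ℝ | ∃ h : α → ℝ, Measurable h ∧ (∀ a, |h a| ≤ 1) ∧
    d = |(∫ a, h a ∂μ) - ∫ a, h a ∂ν| }

/-- The local total variation distance `‖μ - ν‖_J` on a product space: the supremum of
`|μ(h) - ν(h)|` over measurable `h` with `|h| ≤ 1` depending only on the coordinates in `J`. -/
noncomputable def localTV {I : Type*} {S : I → Type*} [∀ i, MeasurableSpace (S i)]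
    (J : Set I) (μ ν : Measure (∀ i, S i)) : ℝ :=
  sSup { d : ℝ | ∃ h : (∀ i, S i) → ℝ, Measurable h ∧ (∀ x, |h x| ≤ 1) ∧
    (∀ x x', (∀ i ∈ J, x i = x' i) → h x = h x') ∧
    d = |(∫ x, h x ∂μ) - ∫ x, h x ∂ν| }

section DobrushinAux

open ProbabilityTheory

variable {α : Type*} [MeasurableSpace α] {μ ν : Measure α}

lemma integrable_of_abs_le_one' {g : α → ℝ} (hg : Measurable g) (hb : ∀ y, |g y| ≤ 1)
    [IsFiniteMeasure μ] : Integrable g μ :=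
  (integrable_const (1 : ℝ)).mono' hg.aestronglyMeasurable
    (ae_of_all _ fun y => by simpa using hb y)

lemma abs_integral_le_of_abs_le' {g : α → ℝ} {c : ℝ} (hb : ∀ y, |g y| ≤ c)
    [IsProbabilityMeasure μ] : |∫ y, g y ∂μ| ≤ c := by
  have := norm_integral_le_of_norm_le_const (μ := μ) (f := g) (C := c)
    (ae_of_all _ fun y => by simpa using hb y)
  simpa [measure_univ] using this

lemma tvDist_set_bdd [IsProbabilityMeasure μ] [IsProbabilityMeasure ν] :
    ∀ d ∈ { d : ℝ | ∃ h : α → ℝ, Measurable h ∧ (∀ a, |h a| ≤ 1) ∧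
      d = |(∫ a, h a ∂μ) - ∫ a, h a ∂ν| }, d ≤ 2 := by
  rintro d ⟨h, hm, hb, rfl⟩
  have h1 : |∫ a, h a ∂μ| ≤ 1 := abs_integral_le_of_abs_le' hb
  have h2 : |∫ a, h a ∂ν| ≤ 1 := abs_integral_le_of_abs_le' hb
  calc |(∫ a, h a ∂μ) - ∫ a, h a ∂ν| ≤ |∫ a, h a ∂μ| + |∫ a, h a ∂ν| := abs_sub _ _
  _ ≤ 2 := by linarith

lemma tvDist_le_two' [IsProbabilityMeasure μ] [IsProbabilityMeasure ν] : tvDist μ ν ≤ 2 :=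
  Real.sSup_le tvDist_set_bdd (by norm_num)

lemma tvDist_nonneg' [IsProbabilityMeasure μ] [IsProbabilityMeasure ν] : 0 ≤ tvDist μ ν :=
  le_csSup ⟨2, tvDist_set_bdd⟩ ⟨fun _ => 0, measurable_const, fun _ => by norm_num, by simp⟩

lemma abs_integral_sub_le_tvDist [IsProbabilityMeasure μ] [IsProbabilityMeasure ν]
    {h : α → ℝ} (hm : Measurable h) (hb : ∀ a, |h a| ≤ 1) :
    |(∫ a, h a ∂μ) - ∫ a, h a ∂ν| ≤ tvDist μ ν :=
  le_csSup ⟨2, tvDist_set_bdd⟩ ⟨h, hm, hb, rfl⟩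

/-- Key scalar bound: integrals of a function with small oscillation differ by at most
`d * tvDist`. -/
lemma abs_integral_sub_integral_le [Nonempty α] [IsProbabilityMeasure μ] [IsProbabilityMeasure ν]
    {g : α → ℝ} (hg : Measurable g) (hgb : ∀ y, |g y| ≤ 1)
    {d : ℝ} (hd : 0 ≤ d) (hosc : ∀ y y', |g y - g y'| ≤ 2 * d) :
    |(∫ y, g y ∂μ) - ∫ y, g y ∂ν| ≤ d * tvDist μ ν := by
  have hbdd : BddAbove (Set.range g) := ⟨1, by rintro _ ⟨y, rfl⟩; exact (abs_le.1 (hgb y)).2⟩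
  set c : ℝ := sSup (Set.range g) - d with hc
  have hne : (Set.range g).Nonempty := Set.range_nonempty g
  have hcb : ∀ y, |g y - c| ≤ d := by
    intro y
    rw [abs_le]
    constructor
    · have h1 : sSup (Set.range g) ≤ g y + 2 * d := by
        refine csSup_le hne ?_
        rintro _ ⟨y', rfl⟩
        have := (abs_le.1 (hosc y' y)).2
        linarith
      simp only [hc]; linarith
    · have : g y ≤ sSup (Set.range g) := le_csSup hbdd ⟨y, rfl⟩
      simp only [hc]; linarith
  rcases hd.eq_or_lt with rfl | hdpos
  · have : ∀ y, g y = c := fun y => by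
      have := abs_le.1 (hcb y); linarith [this.1, this.2]
    rw [funext this]
    simp
  · set h : α → ℝ := fun y => (g y - c) / d with hh
    have hhm : Measurable h := (hg.sub measurable_const).div_const d
    have hhb : ∀ y, |h y| ≤ 1 := by
      intro y
      rw [hh]
      rw [abs_div, abs_of_pos hdpos, div_le_one hdpos]
      exact hcb y
    have hkey : |(∫ y, h y ∂μ) - ∫ y, h y ∂ν| ≤ tvDist μ ν := abs_integral_sub_le_tvDist hhm hhb
    have hint : ∀ (κ : Measure α) [IsProbabilityMeasure κ],
        ∫ y, h y ∂κ = ((∫ y, g y ∂κ) - c) / d := by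
      intro κ hκ
      rw [hh]
      simp only [div_eq_mul_inv]
      rw [integral_mul_const]
      rw [integral_sub (integrable_of_abs_le_one' hg hgb) (integrable_const c)]
      simp [measure_univ]
    rw [hint μ, hint ν] at hkey
    have : ((∫ y, g y ∂μ) - c) / d - ((∫ y, g y ∂ν) - c) / d
        = ((∫ y, g y ∂μ) - ∫ y, g y ∂ν) / d := by ring
    rw [this, abs_div, abs_of_pos hdpos, div_le_iff₀ hdpos] at hkey
    calc |(∫ y, g y ∂μ) - ∫ y, g y ∂ν| ≤ tvDist μ ν * d := hkey
    _ = d * tvDist μ ν := mul_comm _ _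

end DobrushinAux

section DobrushinOsc

variable {I : Type*} {S : I → Type*}

/-- The set of oscillation values of `f` at site `i`. -/
def oscSet (i : I) (f : (∀ j, S j) → ℝ) : Set ℝ :=
  {d | ∃ x x' : ∀ j, S j, (∀ j, j ≠ i → x j = x' j) ∧ d = |f x - f x'|}

/-- The oscillation of `f` at site `i`. -/
noncomputable def osc (i : I) (f : (∀ j, S j) → ℝ) : ℝ := sSup (oscSet i f)

lemma oscSet_bdd {i : I} {f : (∀ j, S j) → ℝ} (hfb : ∀ x, |f x| ≤ 1) :
    ∀ d ∈ oscSet i f, d ≤ 2 := by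
  rintro d ⟨x, x', _, rfl⟩
  calc |f x - f x'| ≤ |f x| + |f x'| := abs_sub _ _
  _ ≤ 2 := by linarith [hfb x, hfb x']

lemma osc_nonneg [Nonempty (∀ j, S j)] {i : I} {f : (∀ j, S j) → ℝ} (hfb : ∀ x, |f x| ≤ 1) :
    0 ≤ osc i f := by
  have x0 : ∀ j, S j := Classical.arbitrary _
  exact le_csSup ⟨2, oscSet_bdd hfb⟩ ⟨x0, x0, fun _ _ => rfl, by simp⟩

lemma osc_le_two [Nonempty (∀ j, S j)] {i : I} {f : (∀ j, S j) → ℝ} (hfb : ∀ x, |f x| ≤ 1) :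
    osc i f ≤ 2 := Real.sSup_le (oscSet_bdd hfb) (by norm_num)

lemma abs_sub_le_osc {i : I} {f : (∀ j, S j) → ℝ} (hfb : ∀ x, |f x| ≤ 1)
    {x x' : ∀ j, S j} (hxx' : ∀ j, j ≠ i → x j = x' j) : |f x - f x'| ≤ osc i f :=
  le_csSup ⟨2, oscSet_bdd hfb⟩ ⟨x, x', hxx', rfl⟩

lemma osc_le {i : I} {f : (∀ j, S j) → ℝ} {a : ℝ} (ha : 0 ≤ a)
    (h : ∀ x x' : ∀ j, S j, (∀ j, j ≠ i → x j = x' j) → |f x - f x'| ≤ a) : osc i f ≤ a :=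
  Real.sSup_le (by rintro d ⟨x, x', hxx', rfl⟩; exact h x x' hxx') ha

end DobrushinOsc

section DobrushinInvariance

open ProbabilityTheory

variable {I : Type*} [Fintype I] [DecidableEq I] {S : I → Type*} [∀ i, MeasurableSpace (S i)]

/-- Invariance of `μ` under resampling coordinate `i` from its conditional distribution. -/
lemma integral_resample (i : I) (μ : Measure (∀ j, S j)) [IsProbabilityMeasure μ]
    (κ : Kernel (∀ j, S j) (S i)) [IsMarkovKernel κ]
    (hcond : ∀ A : Set (S i), MeasurableSet A → ∀ E : Set (∀ j, S j), MeasurableSet E →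
      (∀ x x', (∀ j, j ≠ i → x j = x' j) → (x ∈ E ↔ x' ∈ E)) →
      μ ({x | x i ∈ A} ∩ E) = ∫⁻ x in E, κ x A ∂μ)
    (f : (∀ j, S j) → ℝ) (hf : Measurable f) (hfb : ∀ x, |f x| ≤ 1) :
    ∫ x, f x ∂μ = ∫ x, ∫ y, f (Function.update x i y) ∂(κ x) ∂μ := by
  have hg : Measurable (fun p : (∀ j, S j) × S i => Function.update p.1 i p.2) :=
    measurable_update'
  set ν : Measure (∀ j, S j) :=
    (μ.compProd κ).map (fun p : (∀ j, S j) × S i => Function.update p.1 i p.2) with hν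
  haveI : IsProbabilityMeasure ν := Measure.isProbabilityMeasure_map hg.aemeasurable
  have hμν : ν = μ := by
    refine ext_of_generate_finite _ generateFrom_pi.symm isPiSystem_pi ?_ (by simp)
    rintro s ⟨t, ht, rfl⟩
    simp only [Set.mem_pi, Set.mem_univ, forall_true_left, Set.mem_setOf_eq] at ht
    have htm : ∀ j, MeasurableSet (t j) := fun j => ht j
    have hsm : MeasurableSet (Set.pi Set.univ t) := MeasurableSet.univ_pi htm
    set E : Set (∀ j, S j) := {x | ∀ j, j ≠ i → x j ∈ t j} with hE
    have hEm : MeasurableSet E := by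
      have : E = ⋂ j, {x : ∀ j, S j | j ≠ i → x j ∈ t j} := by
        ext x; simp [hE]
      rw [this]
      refine MeasurableSet.iInter fun j => ?_
      by_cases hji : j = i
      · simp [hji]
      · have : {x : ∀ j, S j | j ≠ i → x j ∈ t j} = (fun x : ∀ j, S j => x j) ⁻¹' (t j) := by
          ext x; simp [hji]
        rw [this]
        exact (measurable_pi_apply j) (htm j)
    have hEinv : ∀ x x', (∀ j, j ≠ i → x j = x' j) → (x ∈ E ↔ x' ∈ E) := by
      intro x x' hxx'
      simp only [hE, Set.mem_setOf_eq]
      constructor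
      · intro h j hj; rw [← hxx' j hj]; exact h j hj
      · intro h j hj; rw [hxx' j hj]; exact h j hj
    have hupd_mem : ∀ (x : ∀ j, S j) (y : S i),
        (Function.update x i y ∈ Set.pi Set.univ t) ↔ (y ∈ t i ∧ x ∈ E) := by
      intro x y
      simp only [Set.mem_pi, Set.mem_univ, forall_true_left, hE, Set.mem_setOf_eq]
      constructor
      · intro h
        refine ⟨by simpa using h i, fun j hj => ?_⟩
        have := h j
        rwa [Function.update_of_ne hj] at this
      · rintro ⟨hy, hx⟩ j
        by_cases hji : j = i
        · subst hji; simpa using hy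
        · rw [Function.update_of_ne hji]; exact hx j hji
    have hkey : ∀ x : ∀ j, S j,
        κ x (Prod.mk x ⁻¹' ((fun p : (∀ j, S j) × S i => Function.update p.1 i p.2) ⁻¹'
          (Set.pi Set.univ t))) = E.indicator (fun x => κ x (t i)) x := by
      intro x
      by_cases hx : x ∈ E
      · rw [Set.indicator_of_mem hx]
        congr 1
        ext y
        simp [hupd_mem x y, hx]
      · rw [Set.indicator_of_notMem hx]
        have : (Prod.mk x ⁻¹' ((fun p : (∀ j, S j) × S i => Function.update p.1 i p.2) ⁻¹'
            (Set.pi Set.univ t))) = ∅ := by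
          ext y
          simp [hupd_mem x y, hx]
        rw [this]
        simp
    rw [hν, Measure.map_apply hg hsm, Measure.compProd_apply (hg hsm)]
    simp_rw [hkey]
    rw [lintegral_indicator hEm, ← hcond (t i) (htm i) E hEm hEinv]
    congr 1
    ext x
    simp only [Set.mem_inter_iff, Set.mem_setOf_eq, Set.mem_pi, Set.mem_univ, forall_true_left,
      hE]
    constructor
    · rintro ⟨h1, h2⟩ j
      by_cases hji : j = i
      · subst hji; exact h1
      · exact h2 j hji
    · intro h
      exact ⟨h i, fun j _ => h j⟩
  calc ∫ x, f x ∂μ = ∫ x, f x ∂ν := by rw [hμν]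
  _ = ∫ p, f (Function.update p.1 i p.2) ∂(μ.compProd κ) := by
      rw [hν, integral_map hg.aemeasurable hf.aestronglyMeasurable]
  _ = ∫ x, ∫ y, f (Function.update x i y) ∂(κ x) ∂μ := by
      exact Measure.integral_compProd (f := fun p : (∀ j, S j) × S i =>
        f (Function.update p.1 i p.2))
        (integrable_of_abs_le_one' (hf.comp hg) (fun p => hfb _))

end DobrushinInvariance
/-- **Dobrushin comparison theorem** (Theorem 8.20 in Georgii, Theorem 3.3 of the paper).
Let `I` be a finite set and `𝕊 = ∏_{i ∈ I} S i` with each `S i` Polish.  Let `ρ` and `ρb` be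
probability measures on `𝕊` with regular conditional distributions `ρc i x` and `ρbc i x` of the
`i`-th coordinate given the remaining coordinates `x^{I∖{i}}`.  Define
`C i j = (1/2) sup {‖ρc i x - ρc i x̄‖ : x, x̄ agree off j}` and
`b j = sup_x ‖ρc j x - ρbc j x‖`.  If the Dobrushin condition `max_i ∑_j C i j < 1` holds,
then the matrix `D = ∑_n C^n` is finite (entrywise summable), and for every `J ⊆ I`,
`‖ρ - ρb‖_J ≤ ∑_{i ∈ J} ∑_{j ∈ I} D i j * b j`. -/
theorem dobrushin_comparison
    {I : Type*} [Fintype I] [DecidableEq I]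
    {S : I → Type*} [∀ i, TopologicalSpace (S i)] [∀ i, PolishSpace (S i)]
    [∀ i, MeasurableSpace (S i)] [∀ i, BorelSpace (S i)]
    (ρ ρb : Measure (∀ i, S i)) [IsProbabilityMeasure ρ] [IsProbabilityMeasure ρb]
    (ρc ρbc : (i : I) → (∀ j, S j) → Measure (S i))
    (hρc_prob : ∀ i x, IsProbabilityMeasure (ρc i x))
    (hρbc_prob : ∀ i x, IsProbabilityMeasure (ρbc i x))
    (hρc_meas : ∀ i (A : Set (S i)), MeasurableSet A → Measurable fun x => ρc i x A)
    (hρbc_meas : ∀ i (A : Set (S i)), MeasurableSet A → Measurable fun x => ρbc i x A)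
    -- `ρc i x` and `ρbc i x` depend on `x` only through the coordinates `x^{I∖{i}}`
    (hρc_loc : ∀ i (x x' : ∀ j, S j), (∀ j, j ≠ i → x j = x' j) → ρc i x = ρc i x')
    (hρbc_loc : ∀ i (x x' : ∀ j, S j), (∀ j, j ≠ i → x j = x' j) → ρbc i x = ρbc i x')
    -- `ρc` is a version of the conditional distribution of `X^i` given `X^{I∖{i}}` under `ρ`:
    (hρc_cond : ∀ i (A : Set (S i)), MeasurableSet A →
      ∀ E : Set (∀ j, S j), MeasurableSet E →
        (∀ x x', (∀ j, j ≠ i → x j = x' j) → (x ∈ E ↔ x' ∈ E)) →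
        ρ ({x | x i ∈ A} ∩ E) = ∫⁻ x in E, ρc i x A ∂ρ)
    -- and similarly for `ρbc` under `ρb`:
    (hρbc_cond : ∀ i (A : Set (S i)), MeasurableSet A →
      ∀ E : Set (∀ j, S j), MeasurableSet E →
        (∀ x x', (∀ j, j ≠ i → x j = x' j) → (x ∈ E ↔ x' ∈ E)) →
        ρb ({x | x i ∈ A} ∩ E) = ∫⁻ x in E, ρbc i x A ∂ρb)
    (C : Matrix I I ℝ) (b : I → ℝ)
    (hC : ∀ i j, C i j = (1 / 2) * sSup { d : ℝ | ∃ x x' : ∀ l, S l,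
      (∀ l, l ≠ j → x l = x' l) ∧ d = tvDist (ρc i x) (ρc i x') })
    (hb : ∀ j, b j = sSup { d : ℝ | ∃ x : ∀ l, S l, d = tvDist (ρc j x) (ρbc j x) })
    (hdob : ∀ i, ∑ j, C i j < 1) :
    ∃ D : Matrix I I ℝ, (∀ i j, HasSum (fun n : ℕ => (C ^ n) i j) (D i j)) ∧
      ∀ J : Finset I, localTV (↑J : Set I) ρ ρb ≤ ∑ i ∈ J, ∑ j, D i j * b j := by
  classical
  open ProbabilityTheory in
  show ∃ D : Matrix I I ℝ, (∀ i j, HasSum (fun n : ℕ => (C ^ n) i j) (D i j)) ∧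
      ∀ J : Finset I, localTV (↑J : Set I) ρ ρb ≤ ∑ i ∈ J, ∑ j, D i j * b j
  -- the state space is nonempty
  have hSne : Nonempty (∀ j, S j) := by
    by_contra hc
    rw [not_nonempty_iff] at hc
    have h1 : ρ Set.univ = 1 := measure_univ
    rw [Set.univ_eq_empty_iff.2 hc] at h1
    simp at h1
  haveI := hSne
  have hSine : ∀ i, Nonempty (S i) := fun i => ⟨(Classical.arbitrary (∀ j, S j)) i⟩
  -- a uniform bound on the row sums
  obtain ⟨r, hr0, hr1, hrow⟩ : ∃ r : ℝ, 0 ≤ r ∧ r < 1 ∧ ∀ i, ∑ j, C i j ≤ r := by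
    rcases isEmpty_or_nonempty I with hI | hI
    · exact ⟨0, le_refl _, by norm_num, fun i => isEmptyElim i⟩
    · refine ⟨max 0 (Finset.univ.sup' Finset.univ_nonempty fun i => ∑ j, C i j),
        le_max_left _ _, ?_, fun i => le_max_of_le_right (Finset.le_sup' (fun i => ∑ j, C i j) (Finset.mem_univ i))⟩
      rw [max_lt_iff]
      exact ⟨by norm_num, (Finset.sup'_lt_iff _).2 fun i _ => hdob i⟩
  -- nonnegativity and total variation bounds from the definitions of `C` and `b`
  have hCtv : ∀ i j (x x' : ∀ l, S l), (∀ l, l ≠ j → x l = x' l) →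
      tvDist (ρc i x) (ρc i x') ≤ 2 * C i j := by
    intro i j x x' hxx'
    have hbdd : ∀ d ∈ { d : ℝ | ∃ x x' : ∀ l, S l,
        (∀ l, l ≠ j → x l = x' l) ∧ d = tvDist (ρc i x) (ρc i x') }, d ≤ 2 := by
      rintro d ⟨y, y', _, rfl⟩
      haveI := hρc_prob i y; haveI := hρc_prob i y'
      exact tvDist_le_two'
    have := le_csSup (s := { d : ℝ | ∃ x x' : ∀ l, S l,
        (∀ l, l ≠ j → x l = x' l) ∧ d = tvDist (ρc i x) (ρc i x') })
      ⟨2, hbdd⟩ (a := tvDist (ρc i x) (ρc i x')) ⟨x, x', hxx', rfl⟩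
    rw [hC i j]; linarith
  have hCnn : ∀ i j, 0 ≤ C i j := by
    intro i j
    have x0 : ∀ l, S l := Classical.arbitrary _
    haveI := hρc_prob i x0
    have h1 : (0:ℝ) ≤ tvDist (ρc i x0) (ρc i x0) := tvDist_nonneg'
    have := hCtv i j x0 x0 (fun _ _ => rfl)
    linarith
  have hbtv : ∀ j (x : ∀ l, S l), tvDist (ρc j x) (ρbc j x) ≤ b j := by
    intro j x
    have hbdd : ∀ d ∈ { d : ℝ | ∃ x : ∀ l, S l, d = tvDist (ρc j x) (ρbc j x) }, d ≤ 2 := by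
      rintro d ⟨y, rfl⟩
      haveI := hρc_prob j y; haveI := hρbc_prob j y
      exact tvDist_le_two'
    rw [hb j]
    exact le_csSup ⟨2, hbdd⟩ ⟨x, rfl⟩
  have hbnn : ∀ j, 0 ≤ b j := by
    intro j
    have x0 : ∀ l, S l := Classical.arbitrary _
    haveI := hρc_prob j x0; haveI := hρbc_prob j x0
    exact le_trans tvDist_nonneg' (hbtv j x0)
  -- the matrix `D`
  have hCpow_nn : ∀ (n : ℕ) i j, 0 ≤ (C ^ n) i j := by
    intro n
    induction n with
    | zero => intro i j; rw [pow_zero, Matrix.one_apply]; split <;> norm_num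
    | succ n ih =>
        intro i j
        rw [pow_succ']
        rw [Matrix.mul_apply]
        exact Finset.sum_nonneg fun k _ => mul_nonneg (hCnn i k) (ih k j)
  have hCpow_le : ∀ (n : ℕ) i j, (C ^ n) i j ≤ r ^ n := by
    intro n
    induction n with
    | zero => intro i j; rw [pow_zero, pow_zero, Matrix.one_apply]; split <;> norm_num
    | succ n ih =>
        intro i j
        rw [pow_succ', Matrix.mul_apply]
        calc ∑ k, C i k * (C ^ n) k j ≤ ∑ k, C i k * r ^ n :=
              Finset.sum_le_sum fun k _ =>
                mul_le_mul_of_nonneg_left (ih k j) (hCnn i k)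
        _ = (∑ k, C i k) * r ^ n := by rw [Finset.sum_mul]
        _ ≤ r * r ^ n :=
              mul_le_mul_of_nonneg_right (hrow i) (pow_nonneg hr0 n)
        _ = r ^ (n + 1) := (pow_succ' r n).symm
  have hsummable : ∀ i j, Summable fun n : ℕ => (C ^ n) i j := fun i j =>
    Summable.of_nonneg_of_le (fun n => hCpow_nn n i j) (fun n => hCpow_le n i j)
      (summable_geometric_of_lt_one hr0 hr1)
  set D : Matrix I I ℝ := Matrix.of fun i j => ∑' n : ℕ, (C ^ n) i j with hD
  have hDnn : ∀ i j, 0 ≤ D i j := fun i j => tsum_nonneg fun n => hCpow_nn n i j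
  have hDid : ∀ i j, D i j = (if i = j then 1 else 0) + ∑ k, C i k * D k j := by
    intro i j
    have h0 : D i j = (C ^ 0) i j + ∑' n : ℕ, (C ^ (n + 1)) i j :=
      Summable.tsum_eq_zero_add (hsummable i j)
    rw [h0, pow_zero, Matrix.one_apply]
    congr 1
    have h1 : ∀ n : ℕ, (C ^ (n + 1)) i j = ∑ k, C i k * (C ^ n) k j := by
      intro n; rw [pow_succ', Matrix.mul_apply]
    rw [tsum_congr h1, Summable.tsum_finsetSum (fun k _ => ((hsummable k j).mul_left (C i k)))]
    refine Finset.sum_congr rfl fun k _ => ?_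
    rw [tsum_mul_left]
    simp [hD]
  -- the weight vector `w`
  set w : I → ℝ := fun i => ∑ j, D i j * b j with hw
  have hwnn : ∀ i, 0 ≤ w i := fun i =>
    Finset.sum_nonneg fun j _ => mul_nonneg (hDnn i j) (hbnn j)
  have hwid : ∀ i, w i = b i + ∑ k, C i k * w k := by
    intro i
    have : w i = ∑ j, ((if i = j then 1 else 0) + ∑ k, C i k * D k j) * b j := by
      rw [hw]
      exact Finset.sum_congr rfl fun j _ => by rw [← hDid i j]
    rw [this]
    have hsplit : ∀ j, ((if i = j then 1 else 0) + ∑ k, C i k * D k j) * b j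
        = (if i = j then 1 else 0) * b j + ∑ k, C i k * (D k j * b j) := by
      intro j; rw [add_mul, Finset.sum_mul]; congr 1; exact Finset.sum_congr rfl fun k _ => by ring
    rw [Finset.sum_congr rfl fun j _ => hsplit j, Finset.sum_add_distrib]
    congr 1
    · simp
    · rw [Finset.sum_comm]
      exact Finset.sum_congr rfl fun k _ => by rw [← Finset.mul_sum]
  -- Markov kernels for the conditional distributions
  have hκm : ∀ i, Measurable (fun x : ∀ j, S j => ρc i x) := fun i =>
    Measure.measurable_of_measurable_coe _ (fun s hs => hρc_meas i s hs)
  have hκbm : ∀ i, Measurable (fun x : ∀ j, S j => ρbc i x) := fun i =>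
    Measure.measurable_of_measurable_coe _ (fun s hs => hρbc_meas i s hs)
  set κ : (i : I) → ProbabilityTheory.Kernel (∀ j, S j) (S i) :=
    fun i => ⟨fun x => ρc i x, hκm i⟩ with hκ
  set κb : (i : I) → ProbabilityTheory.Kernel (∀ j, S j) (S i) :=
    fun i => ⟨fun x => ρbc i x, hκbm i⟩ with hκb
  haveI hκmk : ∀ i, ProbabilityTheory.IsMarkovKernel (κ i) :=
    fun i => ⟨fun x => hρc_prob i x⟩
  haveI hκbmk : ∀ i, ProbabilityTheory.IsMarkovKernel (κb i) :=
    fun i => ⟨fun x => hρbc_prob i x⟩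
  -- the single-site update operators
  set P : (i : I) → ((∀ j, S j) → ℝ) → (∀ j, S j) → ℝ :=
    fun i f x => ∫ y, f (Function.update x i y) ∂(ρc i x) with hP
  set Pb : (i : I) → ((∀ j, S j) → ℝ) → (∀ j, S j) → ℝ :=
    fun i f x => ∫ y, f (Function.update x i y) ∂(ρbc i x) with hPb
  have hPmeas : ∀ i (f : (∀ j, S j) → ℝ), Measurable f → Measurable (P i f) := by
    intro i f hf
    have h1 : StronglyMeasurable fun x : ∀ j, S j =>
        ∫ y, (fun p : (∀ j, S j) × S i => f (Function.update p.1 i p.2)) (x, y) ∂((κ i) x) :=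
      MeasureTheory.StronglyMeasurable.integral_kernel_prod_right'
        (hf.comp measurable_update').stronglyMeasurable
    exact h1.measurable
  have hPbmeas : ∀ i (f : (∀ j, S j) → ℝ), Measurable f → Measurable (Pb i f) := by
    intro i f hf
    have h1 : StronglyMeasurable fun x : ∀ j, S j =>
        ∫ y, (fun p : (∀ j, S j) × S i => f (Function.update p.1 i p.2)) (x, y) ∂((κb i) x) :=
      MeasureTheory.StronglyMeasurable.integral_kernel_prod_right'
        (hf.comp measurable_update').stronglyMeasurable
    exact h1.measurable
  have hPbdd : ∀ i (f : (∀ j, S j) → ℝ), (∀ x, |f x| ≤ 1) → ∀ x, |P i f x| ≤ 1 := by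
    intro i f hfb x
    haveI := hρc_prob i x
    exact abs_integral_le_of_abs_le' (fun y => hfb _)
  have hPbbdd : ∀ i (f : (∀ j, S j) → ℝ), (∀ x, |f x| ≤ 1) → ∀ x, |Pb i f x| ≤ 1 := by
    intro i f hfb x
    haveI := hρbc_prob i x
    exact abs_integral_le_of_abs_le' (fun y => hfb _)
  have hPinv : ∀ i (f : (∀ j, S j) → ℝ), Measurable f → (∀ x, |f x| ≤ 1) →
      ∫ x, f x ∂ρ = ∫ x, P i f x ∂ρ := by
    intro i f hf hfb
    exact integral_resample i ρ (κ i)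
      (fun A hA E hE hEinv => hρc_cond i A hA E hE hEinv) f hf hfb
  have hPbinv : ∀ i (f : (∀ j, S j) → ℝ), Measurable f → (∀ x, |f x| ≤ 1) →
      ∫ x, f x ∂ρb = ∫ x, Pb i f x ∂ρb := by
    intro i f hf hfb
    exact integral_resample i ρb (κb i)
      (fun A hA E hE hEinv => hρbc_cond i A hA E hE hEinv) f hf hfb
  -- `P i f` does not depend on the coordinate `i`
  have hupd_eq : ∀ (i : I) (x x' : ∀ j, S j), (∀ j, j ≠ i → x j = x' j) →
      ∀ y : S i, Function.update x i y = Function.update x' i y := by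
    intro i x x' hxx' y
    funext j
    by_cases hj : j = i
    · subst hj; simp
    · rw [Function.update_of_ne hj, Function.update_of_ne hj]; exact hxx' j hj
  have hPloc : ∀ i (f : (∀ j, S j) → ℝ) (x x' : ∀ j, S j),
      (∀ j, j ≠ i → x j = x' j) → P i f x = P i f x' := by
    intro i f x x' hxx'
    have h1 : ρc i x = ρc i x' := hρc_loc i x x' hxx'
    simp only [hP]
    rw [show (fun y => f (Function.update x i y)) = (fun y => f (Function.update x' i y)) from
      funext fun y => by rw [hupd_eq i x x' hxx' y], h1]
  -- one-step comparison estimate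
  have hstep : ∀ i (f : (∀ j, S j) → ℝ), Measurable f → (∀ x, |f x| ≤ 1) →
      |(∫ x, f x ∂ρ) - ∫ x, f x ∂ρb| ≤
        |(∫ x, P i f x ∂ρ) - ∫ x, P i f x ∂ρb| + (osc i f / 2) * b i := by
    intro i f hf hfb
    haveI : Nonempty (S i) := hSine i
    have hpoint : ∀ x, |P i f x - Pb i f x| ≤ (osc i f / 2) * b i := by
      intro x
      haveI := hρc_prob i x
      haveI := hρbc_prob i x
      have hgm : Measurable (fun y => f (Function.update x i y)) :=
        hf.comp (measurable_update x)
      have hgb : ∀ y, |f (Function.update x i y)| ≤ 1 := fun y => hfb _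
      have hosc' : ∀ y y', |f (Function.update x i y) - f (Function.update x i y')| ≤
          2 * (osc i f / 2) := by
        intro y y'
        rw [mul_div_cancel₀ _ (two_ne_zero)]
        refine abs_sub_le_osc hfb (fun k hk => ?_)
        rw [Function.update_of_ne hk, Function.update_of_ne hk]
      have h0i : 0 ≤ osc i f := osc_nonneg hfb
      have h1 := abs_integral_sub_integral_le (μ := ρc i x) (ν := ρbc i x)
        hgm hgb (by linarith : (0:ℝ) ≤ osc i f / 2) hosc'
      calc |P i f x - Pb i f x| ≤ (osc i f / 2) * tvDist (ρc i x) (ρbc i x) := h1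
      _ ≤ (osc i f / 2) * b i := by
          refine mul_le_mul_of_nonneg_left (hbtv i x) ?_
          linarith
    have hintP : Integrable (P i f) ρb := integrable_of_abs_le_one' (hPmeas i f hf)
      (hPbdd i f hfb)
    have hintPb : Integrable (Pb i f) ρb := integrable_of_abs_le_one' (hPbmeas i f hf)
      (hPbbdd i f hfb)
    have h2 : |(∫ x, P i f x ∂ρb) - ∫ x, Pb i f x ∂ρb| ≤ (osc i f / 2) * b i := by
      rw [← integral_sub hintP hintPb]
      exact abs_integral_le_of_abs_le' hpoint
    rw [hPinv i f hf hfb, hPbinv i f hf hfb]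
    calc |(∫ x, P i f x ∂ρ) - ∫ x, Pb i f x ∂ρb|
        ≤ |(∫ x, P i f x ∂ρ) - ∫ x, P i f x ∂ρb|
          + |(∫ x, P i f x ∂ρb) - ∫ x, Pb i f x ∂ρb| := abs_sub_le _ _ _
    _ ≤ |(∫ x, P i f x ∂ρ) - ∫ x, P i f x ∂ρb| + (osc i f / 2) * b i := by linarith
  -- oscillation propagation
  have hoscP : ∀ i j (f : (∀ j, S j) → ℝ), Measurable f → (∀ x, |f x| ≤ 1) → j ≠ i →
      osc j (P i f) ≤ osc j f + C i j * osc i f := by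
    intro i j f hf hfb hji
    haveI : Nonempty (S i) := hSine i
    have h0j : 0 ≤ osc j f := osc_nonneg hfb
    have h0i : 0 ≤ osc i f := osc_nonneg hfb
    have honn : 0 ≤ osc j f + C i j * osc i f := by
      have := mul_nonneg (hCnn i j) h0i
      linarith
    refine osc_le honn ?_
    intro x x' hxx'
    haveI := hρc_prob i x
    haveI := hρc_prob i x'
    have hgm : Measurable (fun y => f (Function.update x' i y)) :=
      hf.comp (measurable_update x')
    have hgb : ∀ y, |f (Function.update x' i y)| ≤ 1 := fun y => hfb _
    have hgm2 : Measurable (fun y => f (Function.update x i y)) :=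
      hf.comp (measurable_update x)
    have hA : |(∫ y, f (Function.update x i y) ∂(ρc i x))
        - ∫ y, f (Function.update x' i y) ∂(ρc i x)| ≤ osc j f := by
      rw [← integral_sub (integrable_of_abs_le_one' hgm2 (fun y => hfb _))
        (integrable_of_abs_le_one' hgm hgb)]
      refine abs_integral_le_of_abs_le' (fun y => ?_)
      refine abs_sub_le_osc hfb (fun k hk => ?_)
      by_cases hki : k = i
      · subst hki; simp
      · rw [Function.update_of_ne hki, Function.update_of_ne hki]
        exact hxx' k hk
    have hosc' : ∀ y y', |f (Function.update x' i y) - f (Function.update x' i y')| ≤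
        2 * (osc i f / 2) := by
      intro y y'
      rw [mul_div_cancel₀ _ (two_ne_zero)]
      refine abs_sub_le_osc hfb (fun k hk => ?_)
      rw [Function.update_of_ne hk, Function.update_of_ne hk]
    have hB : |(∫ y, f (Function.update x' i y) ∂(ρc i x))
        - ∫ y, f (Function.update x' i y) ∂(ρc i x')| ≤ C i j * osc i f := by
      have h1 := abs_integral_sub_integral_le (μ := ρc i x) (ν := ρc i x')
        hgm hgb (by linarith : (0:ℝ) ≤ osc i f / 2) hosc'
      have h2 : tvDist (ρc i x) (ρc i x') ≤ 2 * C i j := hCtv i j x x' hxx'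
      calc |(∫ y, f (Function.update x' i y) ∂(ρc i x))
          - ∫ y, f (Function.update x' i y) ∂(ρc i x')|
          ≤ (osc i f / 2) * tvDist (ρc i x) (ρc i x') := h1
      _ ≤ (osc i f / 2) * (2 * C i j) := by
          refine mul_le_mul_of_nonneg_left h2 ?_
          linarith
      _ = C i j * osc i f := by ring
    have hsplit : P i f x - P i f x'
        = ((∫ y, f (Function.update x i y) ∂(ρc i x))
            - ∫ y, f (Function.update x' i y) ∂(ρc i x))
          + ((∫ y, f (Function.update x' i y) ∂(ρc i x))
            - ∫ y, f (Function.update x' i y) ∂(ρc i x')) := by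
      simp only [hP]
      ring
    rw [hsplit]
    calc |_ + _| ≤ _ := abs_add_le _ _
    _ ≤ osc j f + C i j * osc i f := add_le_add hA hB
  have hoscPi : ∀ i (f : (∀ j, S j) → ℝ), (∀ x, |f x| ≤ 1) → osc i (P i f) ≤ 0 := by
    intro i f hfb
    refine osc_le (le_refl 0) ?_
    intro x x' hxx'
    rw [hPloc i f x x' hxx', sub_self, abs_zero]
  -- one full sweep over a list of sites
  have hsweep : ∀ L : List I, L.Nodup → ∀ (f : (∀ j, S j) → ℝ) (e : I → ℝ),
      Measurable f → (∀ x, |f x| ≤ 1) → (∀ i, 0 ≤ e i) → (∀ i, osc i f ≤ e i) →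
      ∃ (f' : (∀ j, S j) → ℝ) (e' : I → ℝ), Measurable f' ∧ (∀ x, |f' x| ≤ 1) ∧
        (∀ i, 0 ≤ e' i) ∧ (∀ i, osc i f' ≤ e' i) ∧
        (|(∫ x, f x ∂ρ) - ∫ x, f x ∂ρb| + (1/2) * ∑ i, e' i * w i ≤
          |(∫ x, f' x ∂ρ) - ∫ x, f' x ∂ρb| + (1/2) * ∑ i, e i * w i) ∧
        ∑ i, e' i ≤ (∑ i, e i) - (1 - r) * (L.map e).sum := by
    intro L
    induction L with
    | nil =>
        intro _ f e hf hfb he0 hoscf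
        exact ⟨f, e, hf, hfb, he0, hoscf, le_refl _, by simp⟩
    | cons i L' ih =>
        intro hnd f e hf hfb he0 hoscf
        rw [List.nodup_cons] at hnd
        obtain ⟨hiL', hnd'⟩ := hnd
        set f1 : (∀ j, S j) → ℝ := P i f with hf1
        set e1 : I → ℝ := fun j => if j = i then 0 else e j + C i j * e i with he1
        have hf1m : Measurable f1 := hPmeas i f hf
        have hf1b : ∀ x, |f1 x| ≤ 1 := hPbdd i f hfb
        have he10 : ∀ j, 0 ≤ e1 j := by
          intro j
          by_cases hji : j = i
          · simp only [he1, if_pos hji]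
            exact le_refl 0
          · simp only [he1, if_neg hji]
            exact add_nonneg (he0 j) (mul_nonneg (hCnn i j) (he0 i))
        have hosc1 : ∀ j, osc j f1 ≤ e1 j := by
          intro j
          by_cases hji : j = i
          · subst hji
            simp only [he1, if_pos rfl]
            exact hoscPi j f hfb
          · simp only [he1, if_neg hji]
            calc osc j f1 ≤ osc j f + C i j * osc i f := hoscP i j f hf hfb hji
            _ ≤ e j + C i j * e i :=
                add_le_add (hoscf j) (mul_le_mul_of_nonneg_left (hoscf i) (hCnn i j))
        -- potential decrease
        have hpot : (1/2) * ∑ j, e1 j * w j + (e i / 2) * b i ≤ (1/2) * ∑ j, e j * w j := by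
          have hs1 : ∑ j, e1 j * w j = ∑ j ∈ Finset.univ.erase i, (e j + C i j * e i) * w j := by
            rw [← Finset.sum_erase (Finset.univ) (f := fun j => e1 j * w j)
              (by simp [he1] : e1 i * w i = 0)]
            refine Finset.sum_congr rfl fun j hj => ?_
            have hji : j ≠ i := (Finset.mem_erase.1 hj).1
            simp only [he1, if_neg hji]
          have hs2 : ∑ j ∈ Finset.univ.erase i, (e j + C i j * e i) * w j
              = (∑ j ∈ Finset.univ.erase i, e j * w j)
                + e i * ∑ j ∈ Finset.univ.erase i, C i j * w j := by
            rw [Finset.mul_sum, ← Finset.sum_add_distrib]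
            refine Finset.sum_congr rfl fun j _ => ?_
            ring
          have hs3 : ∑ j ∈ Finset.univ.erase i, e j * w j
              = (∑ j, e j * w j) - e i * w i :=
            Finset.sum_erase_eq_sub (Finset.mem_univ i)
          have hs4 : ∑ j ∈ Finset.univ.erase i, C i j * w j ≤ ∑ j, C i j * w j :=
            Finset.sum_le_sum_of_subset_of_nonneg (Finset.erase_subset _ _)
              (fun j _ _ => mul_nonneg (hCnn i j) (hwnn j))
          have hs5 : e i * (∑ j ∈ Finset.univ.erase i, C i j * w j)
              ≤ e i * ∑ j, C i j * w j := mul_le_mul_of_nonneg_left hs4 (he0 i)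
          have hmul : e i * w i = e i * b i + e i * ∑ k, C i k * w k := by
            rw [hwid i]; ring
          rw [hs1, hs2, hs3]
          linarith
        -- step estimate with the bound vector
        have hstep' : |(∫ x, f x ∂ρ) - ∫ x, f x ∂ρb| ≤
            |(∫ x, f1 x ∂ρ) - ∫ x, f1 x ∂ρb| + (e i / 2) * b i := by
          have h1 := hstep i f hf hfb
          have h2 : (osc i f / 2) * b i ≤ (e i / 2) * b i := by
            refine mul_le_mul_of_nonneg_right ?_ (hbnn i)
            linarith [hoscf i]
          calc |(∫ x, f x ∂ρ) - ∫ x, f x ∂ρb|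
              ≤ |(∫ x, P i f x ∂ρ) - ∫ x, P i f x ∂ρb| + (osc i f / 2) * b i := h1
          _ ≤ |(∫ x, f1 x ∂ρ) - ∫ x, f1 x ∂ρb| + (e i / 2) * b i := by
              rw [hf1]; linarith
        -- ℓ¹ decrease for one site
        have hl1 : ∑ j, e1 j ≤ (∑ j, e j) - (1 - r) * e i := by
          have hs1 : ∑ j, e1 j = ∑ j ∈ Finset.univ.erase i, (e j + C i j * e i) := by
            rw [← Finset.sum_erase (Finset.univ) (f := fun j => e1 j)
              (by simp [he1] : e1 i = 0)]
            refine Finset.sum_congr rfl fun j hj => ?_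
            have hji : j ≠ i := (Finset.mem_erase.1 hj).1
            simp only [he1, if_neg hji]
          have hs2 : ∑ j ∈ Finset.univ.erase i, (e j + C i j * e i)
              = (∑ j ∈ Finset.univ.erase i, e j) + (∑ j ∈ Finset.univ.erase i, C i j) * e i := by
            rw [Finset.sum_mul, ← Finset.sum_add_distrib]
          have hs3 : ∑ j ∈ Finset.univ.erase i, e j = (∑ j, e j) - e i :=
            Finset.sum_erase_eq_sub (Finset.mem_univ i)
          have hs4 : ∑ j ∈ Finset.univ.erase i, C i j ≤ r := by
            refine le_trans (Finset.sum_le_sum_of_subset_of_nonneg (Finset.erase_subset _ _)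
              (fun j _ _ => hCnn i j)) (hrow i)
          have hs5 : (∑ j ∈ Finset.univ.erase i, C i j) * e i ≤ r * e i :=
            mul_le_mul_of_nonneg_right hs4 (he0 i)
          rw [hs1, hs2, hs3]
          linarith
        -- apply the induction hypothesis
        obtain ⟨f', e', hf'm, hf'b, he'0, hosc', hpot', hl1'⟩ :=
          ih hnd' f1 e1 hf1m hf1b he10 hosc1
        refine ⟨f', e', hf'm, hf'b, he'0, hosc', ?_, ?_⟩
        · linarith
        · have hmap : (L'.map e1).sum ≥ (L'.map e).sum := by
            refine List.sum_le_sum ?_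
            intro j hj
            have hji : j ≠ i := fun hji => hiL' (hji ▸ hj)
            simp only [he1, if_neg hji]
            have := mul_nonneg (hCnn i j) (he0 i)
            linarith
          have hmono : (1 - r) * (L'.map e).sum ≤ (1 - r) * (L'.map e1).sum :=
            mul_le_mul_of_nonneg_left hmap (by linarith)
          have hconssum : ((i :: L').map e).sum = e i + (L'.map e).sum := by
            simp
          rw [hconssum]
          linarith
  -- iterated sweeps
  have hiter : ∀ n : ℕ, ∀ (f : (∀ j, S j) → ℝ) (e : I → ℝ),
      Measurable f → (∀ x, |f x| ≤ 1) → (∀ i, 0 ≤ e i) → (∀ i, osc i f ≤ e i) →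
      ∃ (f' : (∀ j, S j) → ℝ) (e' : I → ℝ), Measurable f' ∧ (∀ x, |f' x| ≤ 1) ∧
        (∀ i, 0 ≤ e' i) ∧ (∀ i, osc i f' ≤ e' i) ∧
        (|(∫ x, f x ∂ρ) - ∫ x, f x ∂ρb| + (1/2) * ∑ i, e' i * w i ≤
          |(∫ x, f' x ∂ρ) - ∫ x, f' x ∂ρb| + (1/2) * ∑ i, e i * w i) ∧
        ∑ i, e' i ≤ r ^ n * ∑ i, e i := by
    intro n
    induction n with
    | zero =>
        intro f e hf hfb he0 hoscf
        exact ⟨f, e, hf, hfb, he0, hoscf, le_refl _, by rw [pow_zero, one_mul]⟩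
    | succ n ihn =>
        intro f e hf hfb he0 hoscf
        obtain ⟨f1, e1, hf1m, hf1b, he10, hosc1, hpot1, hl11⟩ :=
          hsweep Finset.univ.toList (Finset.nodup_toList _) f e hf hfb he0 hoscf
        have hLsum : ((Finset.univ.toList (α := I)).map e).sum = ∑ i, e i :=
          Finset.sum_map_toList _ _
        rw [hLsum] at hl11
        have hl11' : ∑ i, e1 i ≤ r * ∑ i, e i := by linarith
        obtain ⟨f', e', hf'm, hf'b, he'0, hosc', hpot', hl1'⟩ :=
          ihn f1 e1 hf1m hf1b he10 hosc1
        refine ⟨f', e', hf'm, hf'b, he'0, hosc', by linarith, ?_⟩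
        calc ∑ i, e' i ≤ r ^ n * ∑ i, e1 i := hl1'
        _ ≤ r ^ n * (r * ∑ i, e i) :=
            mul_le_mul_of_nonneg_left hl11' (pow_nonneg hr0 n)
        _ = r ^ (n + 1) * ∑ i, e i := by rw [pow_succ]; ring
  -- global bound through a chain of single-site changes
  have hhyb : ∀ (f : (∀ j, S j) → ℝ), (∀ x, |f x| ≤ 1) → ∀ (x x' : ∀ j, S j),
      |f x - f x'| ≤ ∑ i, osc i f := by
    intro f hfb x x'
    have key : ∀ s : Finset I,
        |f x - f (fun j => if j ∈ s then x' j else x j)| ≤ ∑ i ∈ s, osc i f := by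
      intro s
      induction s using Finset.induction_on with
      | empty => simp
      | @insert i s hi ihs =>
          have hagree : ∀ j, j ≠ i →
              (fun j => if j ∈ s then x' j else x j) j
                = (fun j => if j ∈ insert i s then x' j else x j) j := by
            intro j hj
            by_cases hjs : j ∈ s
            · simp [hjs]
            · simp [hjs, hj]
          have h1 : |f (fun j => if j ∈ s then x' j else x j)
              - f (fun j => if j ∈ insert i s then x' j else x j)| ≤ osc i f :=
            abs_sub_le_osc hfb hagree
          calc |f x - f (fun j => if j ∈ insert i s then x' j else x j)|
              ≤ |f x - f (fun j => if j ∈ s then x' j else x j)|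
                + |f (fun j => if j ∈ s then x' j else x j)
                  - f (fun j => if j ∈ insert i s then x' j else x j)| := abs_sub_le _ _ _
          _ ≤ (∑ i ∈ s, osc i f) + osc i f := add_le_add ihs h1
          _ = ∑ j ∈ insert i s, osc j f := by rw [Finset.sum_insert hi]; ring
    have h2 : (fun j => if j ∈ Finset.univ then x' j else x j) = x' := by
      funext j; simp
    have := key Finset.univ
    rwa [h2] at this
  have hdiff : ∀ (f : (∀ j, S j) → ℝ), Measurable f → (∀ x, |f x| ≤ 1) →
      |(∫ x, f x ∂ρ) - ∫ x, f x ∂ρb| ≤ 2 * ∑ i, osc i f := by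
    intro f hf hfb
    obtain ⟨x0⟩ := hSne
    have hint1 : Integrable f ρ := integrable_of_abs_le_one' hf hfb
    have hint2 : Integrable f ρb := integrable_of_abs_le_one' hf hfb
    have h1 : |(∫ x, f x ∂ρ) - f x0| ≤ ∑ i, osc i f := by
      have heq : (∫ x, f x ∂ρ) - f x0 = ∫ x, (f x - f x0) ∂ρ := by
        rw [integral_sub hint1 (integrable_const _)]
        simp [measure_univ]
      rw [heq]
      exact abs_integral_le_of_abs_le' (fun x => hhyb f hfb x x0)
    have h2 : |(∫ x, f x ∂ρb) - f x0| ≤ ∑ i, osc i f := by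
      have heq : (∫ x, f x ∂ρb) - f x0 = ∫ x, (f x - f x0) ∂ρb := by
        rw [integral_sub hint2 (integrable_const _)]
        simp [measure_univ]
      rw [heq]
      exact abs_integral_le_of_abs_le' (fun x => hhyb f hfb x x0)
    calc |(∫ x, f x ∂ρ) - ∫ x, f x ∂ρb|
        ≤ |(∫ x, f x ∂ρ) - f x0| + |f x0 - ∫ x, f x ∂ρb| := abs_sub_le _ _ _
    _ = |(∫ x, f x ∂ρ) - f x0| + |(∫ x, f x ∂ρb) - f x0| := by rw [abs_sub_comm (f x0)]
    _ ≤ 2 * ∑ i, osc i f := by linarith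
  -- the main estimate for a test function
  have hmain : ∀ (h : (∀ j, S j) → ℝ), Measurable h → (∀ x, |h x| ≤ 1) →
      |(∫ x, h x ∂ρ) - ∫ x, h x ∂ρb| ≤ (1/2) * ∑ i, osc i h * w i := by
    intro h hm hb1
    set e0 : I → ℝ := fun i => osc i h with he0def
    have he00 : ∀ i, 0 ≤ e0 i := fun i => osc_nonneg hb1
    have he02 : ∀ i, e0 i ≤ 2 := fun i => osc_le_two hb1
    have hbound : ∀ n : ℕ, |(∫ x, h x ∂ρ) - ∫ x, h x ∂ρb| ≤
        (1/2) * (∑ i, e0 i * w i) + (4 * (Fintype.card I : ℝ)) * r ^ n := by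
      intro n
      obtain ⟨f', e', hf'm, hf'b, he'0, hosc', hpot', hl1'⟩ :=
        hiter n h e0 hm hb1 he00 (fun i => le_refl _)
      have hA : |(∫ x, f' x ∂ρ) - ∫ x, f' x ∂ρb| ≤ 2 * ∑ i, e' i := by
        calc |(∫ x, f' x ∂ρ) - ∫ x, f' x ∂ρb| ≤ 2 * ∑ i, osc i f' := hdiff f' hf'm hf'b
        _ ≤ 2 * ∑ i, e' i := by
            have hss : ∑ i, osc i f' ≤ ∑ i, e' i :=
              Finset.sum_le_sum fun i _ => hosc' i
            linarith
      have hB : ∑ i, e0 i ≤ 2 * (Fintype.card I : ℝ) := by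
        calc ∑ i, e0 i ≤ ∑ _i : I, (2:ℝ) := Finset.sum_le_sum (fun i _ => he02 i)
        _ = 2 * (Fintype.card I : ℝ) := by
            rw [Finset.sum_const, Finset.card_univ]
            simp [mul_comm]
      have hC' : ∑ i, e' i ≤ r ^ n * (2 * (Fintype.card I : ℝ)) :=
        le_trans hl1' (mul_le_mul_of_nonneg_left hB (pow_nonneg hr0 n))
      have hpw : 0 ≤ (1/2) * ∑ i, e' i * w i :=
        mul_nonneg (by norm_num)
          (Finset.sum_nonneg fun i _ => mul_nonneg (he'0 i) (hwnn i))
      have h0 : |(∫ x, h x ∂ρ) - ∫ x, h x ∂ρb| ≤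
          |(∫ x, f' x ∂ρ) - ∫ x, f' x ∂ρb| + (1/2) * ∑ i, e0 i * w i := by
        linarith
      have hrn : (0:ℝ) ≤ r ^ n := pow_nonneg hr0 n
      calc |(∫ x, h x ∂ρ) - ∫ x, h x ∂ρb|
          ≤ |(∫ x, f' x ∂ρ) - ∫ x, f' x ∂ρb| + (1/2) * ∑ i, e0 i * w i := h0
      _ ≤ 2 * (r ^ n * (2 * (Fintype.card I : ℝ))) + (1/2) * ∑ i, e0 i * w i := by
          linarith
      _ = (1/2) * (∑ i, e0 i * w i) + (4 * (Fintype.card I : ℝ)) * r ^ n := by ring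
    have hlim : Filter.Tendsto
        (fun n : ℕ => (1/2) * (∑ i, e0 i * w i) + (4 * (Fintype.card I : ℝ)) * r ^ n)
        Filter.atTop (nhds ((1/2) * ∑ i, e0 i * w i)) := by
      have h1 : Filter.Tendsto (fun n : ℕ => r ^ n) Filter.atTop (nhds 0) :=
        tendsto_pow_atTop_nhds_zero_of_lt_one hr0 hr1
      have h2 := (h1.const_mul (4 * (Fintype.card I : ℝ))).const_add
        ((1/2) * ∑ i, e0 i * w i)
      simpa using h2
    exact ge_of_tendsto' hlim hbound
  -- conclusion
  refine ⟨D, fun i j => (hsummable i j).hasSum, ?_⟩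
  intro J
  have hRHS : 0 ≤ ∑ i ∈ J, ∑ j, D i j * b j :=
    Finset.sum_nonneg fun i _ => Finset.sum_nonneg fun j _ => mul_nonneg (hDnn i j) (hbnn j)
  refine Real.sSup_le ?_ hRHS
  rintro d ⟨h, hm, hb1, hloc, rfl⟩
  have hosc0 : ∀ i, i ∉ J → osc i h = 0 := by
    intro i hiJ
    have hle : osc i h ≤ 0 := by
      refine osc_le (le_refl 0) ?_
      intro x x' hxx'
      have : h x = h x' := by
        refine hloc x x' ?_
        intro j hj
        refine hxx' j ?_
        intro hji
        exact hiJ (Finset.mem_coe.1 (hji ▸ hj))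
      rw [this, sub_self, abs_zero]
    exact le_antisymm hle (osc_nonneg hb1)
  have hsum0 : ∑ i, osc i h * w i = ∑ i ∈ J, osc i h * w i := by
    symm
    refine Finset.sum_subset (Finset.subset_univ J) ?_
    intro i _ hiJ
    rw [hosc0 i hiJ, zero_mul]
  have hsumJ : ∑ i ∈ J, osc i h * w i ≤ ∑ i ∈ J, 2 * w i :=
    Finset.sum_le_sum fun i _ =>
      mul_le_mul_of_nonneg_right (osc_le_two hb1) (hwnn i)
  have := hmain h hm hb1
  calc |(∫ x, h x ∂ρ) - ∫ x, h x ∂ρb| ≤ (1/2) * ∑ i, osc i h * w i := this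
  _ = (1/2) * ∑ i ∈ J, osc i h * w i := by rw [hsum0]
  _ ≤ (1/2) * ∑ i ∈ J, 2 * w i := by linarith
  _ = ∑ i ∈ J, w i := by rw [Finset.mul_sum]; refine Finset.sum_congr rfl fun i _ => by ring
  _ = ∑ i ∈ J, ∑ j, D i j * b j := rfl
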